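/- On the monoplex cycle network G_C on N ≥ 7 agents with seed set S₀ = {j}, for all indices with 3 ≤ i ≤ N−3 and j ∈ {2, …, i−2} ∪ {i+2, …, N−2}, the probability that agent i is active at steady state of the LTM is ℙ_LTM(i) = (1/2)^{|i−j|} + (1/2)^{N−|i−j|}. -/
import Mathlib


open MeasureTheory

inductive Protocol
  | OR
  | AND
deriving DecidableEq

noncomputable def ltmStep {n m : ℕ} (w : Fin m → Fin n → Fin n → ℝ)
    (u : Fin n → Protocol) (μ : Fin n → Fin m → ℝ)
    (A : Finset (Fin n)) : Finset (Fin n) :=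
  A ∪ Finset.univ.filter fun i =>
    (u i = Protocol.OR ∧ ∃ k, μ i k < ∑ j ∈ A, w k i j) ∨
    (u i = Protocol.AND ∧ ∀ k, μ i k < ∑ j ∈ A, w k i j)

noncomputable def ltmSS {n m : ℕ} (w : Fin m → Fin n → Fin n → ℝ)
    (u : Fin n → Protocol) (S₀ : Finset (Fin n))
    (μ : Fin n → Fin m → ℝ) : Finset (Fin n) :=
  (ltmStep w u μ)^[n] S₀

noncomputable def thMeasure (n m : ℕ) : Measure (Fin n → Fin m → ℝ) :=
  Measure.pi fun _ => Measure.pi fun _ => volume.restrict (Set.Icc (0:ℝ) 1)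

noncomputable def pLTM {n m : ℕ} (w : Fin m → Fin n → Fin n → ℝ)
    (u : Fin n → Protocol) (S₀ : Finset (Fin n)) (i : Fin n) : ℝ :=
  (thMeasure n m {μ | i ∈ ltmSS w u S₀ μ}).toReal

def lemStep {n m : ℕ} (S₀ : Finset (Fin n)) (u : Fin n → Protocol)
    (σ : Fin n → Fin m → Fin n) (A : Finset (Fin n)) : Finset (Fin n) :=
  S₀ ∪ A ∪ Finset.univ.filter fun i =>
    (u i = Protocol.OR ∧ ∃ k, σ i k ∈ A) ∨
    (u i = Protocol.AND ∧ ∀ k, σ i k ∈ A)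

def UReachable {n m : ℕ} (S₀ : Finset (Fin n)) (u : Fin n → Protocol)
    (σ : Fin n → Fin m → Fin n) (i : Fin n) : Prop :=
  i ∈ (lemStep S₀ u σ)^[n] S₀

instance {n m : ℕ} (S₀ : Finset (Fin n)) (u : Fin n → Protocol)
    (σ : Fin n → Fin m → Fin n) (i : Fin n) : Decidable (UReachable S₀ u σ i) := by
  unfold UReachable; infer_instance

noncomputable def rProb {n m : ℕ} (w : Fin m → Fin n → Fin n → ℝ)
    (S₀ : Finset (Fin n)) (u : Fin n → Protocol) (i : Fin n) : ℝ :=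
  ∑ σ : Fin n → Fin m → Fin n,
    if UReachable S₀ u σ i then ∏ a : Fin n, ∏ k : Fin m, w k a (σ a k) else 0

noncomputable def casCen {n m : ℕ} (w : Fin m → Fin n → Fin n → ℝ)
    (u : Fin n → Protocol) (j : Fin n) : ℝ :=
  ∑ i : Fin n, pLTM w u {j} i

noncomputable def pathW (N : ℕ) (i j : Fin N) : ℝ :=
  if j.val = i.val + 1 ∨ i.val = j.val + 1 then
    (if i.val = 0 ∨ i.val = N - 1 then 1 else 1/2)
  else 0

noncomputable def cycleW (N : ℕ) (i j : Fin N) : ℝ :=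
  if (i.val + 1) % N = j.val ∨ (j.val + 1) % N = i.val then 1/2 else 0

noncomputable def permW2 (N : ℕ) (i j : Fin N) : ℝ :=
  if ((i.val + 1) % N = j.val ∨ (j.val + 1) % N = i.val) ∧
      ¬((i.val = N - 2 ∧ j.val = N - 1) ∨ (i.val = N - 1 ∧ j.val = N - 2)) then
    (if i.val = N - 2 ∨ i.val = N - 1 then 1 else 1/2)
  else 0

namespace CP
variable {N : ℕ} [NeZero N]

noncomputable def cstep (μ : Fin N → Fin 1 → ℝ) (A : Finset (Fin N)) : Finset (Fin N) :=
  A ∪ Finset.univ.filter fun i => μ i 0 < ∑ x ∈ A, cycleW N i x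

lemma ltmStep_eq_cstep (u : Fin N → Protocol) (μ : Fin N → Fin 1 → ℝ) :
    ltmStep (fun _ : Fin 1 => cycleW N) u μ = cstep μ := by
  funext A
  unfold ltmStep cstep
  congr 1
  apply Finset.filter_congr
  intro x _
  cases h : u x <;>
    simp [h, Fin.exists_fin_one, Fin.forall_fin_one]

lemma mod2N {M u : ℕ} (hM : 0 < M) (h : u < 2 * M) : u % M = if u < M then u else u - M := by
  split_ifs with h'
  · exact Nat.mod_eq_of_lt h'
  · rw [Nat.mod_eq_sub_mod (by omega)]
    exact Nat.mod_eq_of_lt (by omega)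

lemma val_one (hN : 3 ≤ N) : (1 : Fin N).val = 1 := by
  rw [Fin.val_one']
  exact Nat.mod_eq_of_lt (by omega)

lemma val_add_one (hN : 3 ≤ N) (a : Fin N) : (a + 1).val = (a.val + 1) % N := by
  rw [Fin.val_add, val_one hN]

lemma val_sub_one (hN : 3 ≤ N) (a : Fin N) : (a - 1).val = (N - 1 + a.val) % N := by
  rw [Fin.sub_def, val_one hN]

lemma cycleW_eq (hN : 3 ≤ N) (a x : Fin N) :
    cycleW N a x = if x = a + 1 ∨ x = a - 1 then (1/2 : ℝ) else 0 := by
  unfold cycleW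
  have ha := a.isLt; have hx := x.isLt
  have h1 : ((a.val + 1) % N = x.val) ↔ x = a + 1 := by
    rw [Fin.ext_iff, val_add_one hN]; exact eq_comm
  have h2 : ((x.val + 1) % N = a.val) ↔ x = a - 1 := by
    rw [Fin.ext_iff, val_sub_one hN, mod2N (by omega) (by omega),
      mod2N (by omega) (by omega)]
    split_ifs <;> omega
  rw [if_congr (or_congr h1 h2) rfl rfl]

lemma nbr_ne (hN : 3 ≤ N) (a : Fin N) : a + 1 ≠ a - 1 := by
  have ha := a.isLt
  intro h
  have := congrArg Fin.val h
  rw [val_add_one hN, val_sub_one hN, mod2N (by omega) (by omega),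
    mod2N (by omega) (by omega)] at this
  split_ifs at this <;> omega

lemma sum_cycleW (hN : 3 ≤ N) (A : Finset (Fin N)) (a : Fin N) :
    ∑ x ∈ A, cycleW N a x =
      (if a + 1 ∈ A then (1:ℝ)/2 else 0) + (if a - 1 ∈ A then (1:ℝ)/2 else 0) := by
  have hne := nbr_ne hN a
  calc ∑ x ∈ A, cycleW N a x
      = ∑ x ∈ A, ((if x = a + 1 then (1:ℝ)/2 else 0) + (if x = a - 1 then (1:ℝ)/2 else 0)) := by
        apply Finset.sum_congr rfl
        intro x _
        rw [cycleW_eq hN]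
        by_cases h1 : x = a + 1 <;> by_cases h2 : x = a - 1 <;> simp_all
    _ = _ := by
        rw [Finset.sum_add_distrib, Finset.sum_ite_eq' A (a+1) (fun _ => (1:ℝ)/2),
          Finset.sum_ite_eq' A (a-1) (fun _ => (1:ℝ)/2)]

lemma subset_cstep (μ : Fin N → Fin 1 → ℝ) (A : Finset (Fin N)) : A ⊆ cstep μ A :=
  Finset.subset_union_left

lemma cstep_mono (μ : Fin N → Fin 1 → ℝ) {A B : Finset (Fin N)} (h : A ⊆ B) :
    cstep μ A ⊆ cstep μ B := by
  unfold cstep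
  apply Finset.union_subset_union h
  intro x hx
  simp only [Finset.mem_filter, Finset.mem_univ, true_and] at hx ⊢
  refine lt_of_lt_of_le hx ?_
  apply Finset.sum_le_sum_of_subset_of_nonneg h
  intro y _ _
  unfold cycleW
  split <;> norm_num

lemma iter_mono (μ : Fin N → Fin 1 → ℝ) (A : Finset (Fin N)) {s t : ℕ} (h : s ≤ t) :
    (cstep μ)^[s] A ⊆ (cstep μ)^[t] A := by
  induction t with
  | zero => simp_all
  | succ t ih =>
    rcases Nat.lt_or_ge s (t+1) with h' | h'
    · refine (ih (by omega)).trans ?_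
      rw [Function.iterate_succ_apply']
      exact subset_cstep μ _
    · have : s = t + 1 := by omega
      subst this; rfl

lemma mem_cstep_one (hN : 3 ≤ N) (μ : Fin N → Fin 1 → ℝ) {A : Finset (Fin N)} {b : Fin N}
    (h : b + 1 ∈ A ∨ b - 1 ∈ A) (hμ : μ b 0 < 1/2) : b ∈ cstep μ A := by
  unfold cstep
  apply Finset.mem_union_right
  simp only [Finset.mem_filter, Finset.mem_univ, true_and]
  rw [sum_cycleW hN]
  rcases h with h | h <;> split_ifs <;> simp_all <;> linarith

lemma mem_cstep_two (hN : 3 ≤ N) (μ : Fin N → Fin 1 → ℝ) {A : Finset (Fin N)} {b : Fin N}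
    (h1 : b + 1 ∈ A) (h2 : b - 1 ∈ A) (hμ : μ b 0 < 1) : b ∈ cstep μ A := by
  unfold cstep
  apply Finset.mem_union_right
  simp only [Finset.mem_filter, Finset.mem_univ, true_and]
  rw [sum_cycleW hN, if_pos h1, if_pos h2]
  linarith

lemma cstep_cases (hN : 3 ≤ N) {μ : Fin N → Fin 1 → ℝ} {A : Finset (Fin N)} {b : Fin N}
    (h0 : 0 ≤ μ b 0) (hb : b ∈ cstep μ A) :
    b ∈ A ∨ ((b + 1 ∈ A ∨ b - 1 ∈ A) ∧ μ b 0 < 1/2) ∨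
      (b + 1 ∈ A ∧ b - 1 ∈ A ∧ μ b 0 < 1) := by
  unfold cstep at hb
  rcases Finset.mem_union.mp hb with h | h
  · exact Or.inl h
  · simp only [Finset.mem_filter, Finset.mem_univ, true_and] at h
    rw [sum_cycleW hN] at h
    split_ifs at h with h1 h2 h2
    · right; right; exact ⟨h1, h2, by linarith⟩
    · right; left; exact ⟨Or.inl h1, by linarith⟩
    · right; left; exact ⟨Or.inr h2, by linarith⟩
    · linarith

-- arc positions
def fpos (j : Fin N) (k : ℕ) : Fin N := ⟨(j.val + k) % N, Nat.mod_lt _ j.pos⟩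

lemma fpos_val (j : Fin N) (k : ℕ) : (fpos j k).val = (j.val + k) % N := rfl

lemma fpos_zero (j : Fin N) : fpos j 0 = j := by
  apply Fin.ext
  show (j.val + 0) % N = j.val
  rw [Nat.add_zero]
  exact Nat.mod_eq_of_lt j.isLt

lemma fpos_N (j : Fin N) : fpos j N = j := by
  have hj := j.isLt
  apply Fin.ext
  show (j.val + N) % N = j.val
  rw [mod2N j.pos (by omega)]
  split_ifs <;> omega

lemma fpos_succ (hN : 3 ≤ N) (j : Fin N) (k : ℕ) : fpos j (k + 1) = fpos j k + 1 := by
  apply Fin.ext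
  rw [val_add_one hN]
  show (j.val + (k + 1)) % N = ((j.val + k) % N + 1) % N
  conv_lhs => rw [show j.val + (k + 1) = (j.val + k) + 1 from by omega]
  rw [Nat.add_mod (j.val + k) 1, Nat.mod_eq_of_lt (show 1 < N by omega)]

lemma fpos_sub_one (hN : 3 ≤ N) (j : Fin N) {k : ℕ} (hk : 1 ≤ k) :
    fpos j k - 1 = fpos j (k - 1) := by
  have : fpos j ((k - 1) + 1) = fpos j (k - 1) + 1 := fpos_succ hN j (k - 1)
  rw [show k - 1 + 1 = k from by omega] at this
  rw [this, add_sub_cancel_right]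

lemma fpos_inj (j : Fin N) {k l : ℕ} (hk : k < N) (hl : l < N)
    (h : fpos j k = fpos j l) : k = l := by
  have hj := j.isLt
  have := congrArg Fin.val h
  rw [fpos_val, fpos_val, mod2N (by omega) (by omega), mod2N (by omega) (by omega)] at this
  split_ifs at this <;> omega

def idxf (j a : Fin N) : ℕ := (a.val + N - j.val) % N

lemma idxf_lt (j a : Fin N) : idxf j a < N := Nat.mod_lt _ j.pos

lemma fpos_idxf (j a : Fin N) : fpos j (idxf j a) = a := by
  have ha := a.isLt; have hj := j.isLt
  apply Fin.ext
  show (j.val + (a.val + N - j.val) % N) % N = a.val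
  rcases Nat.lt_or_ge a.val j.val with h | h
  · rw [Nat.mod_eq_of_lt (show a.val + N - j.val < N by omega),
      show j.val + (a.val + N - j.val) = a.val + N from by omega,
      Nat.mod_eq_sub_mod (show N ≤ a.val + N by omega),
      show a.val + N - N = a.val from by omega,
      Nat.mod_eq_of_lt ha]
  · rw [Nat.mod_eq_sub_mod (show N ≤ a.val + N - j.val by omega),
      show a.val + N - j.val - N = a.val - j.val from by omega,
      Nat.mod_eq_of_lt (show a.val - j.val < N by omega),
      show j.val + (a.val - j.val) = a.val from by omega,
      Nat.mod_eq_of_lt ha]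

lemma idxf_fpos (j : Fin N) {k : ℕ} (hk : k < N) : idxf j (fpos j k) = k := by
  have hj := j.isLt
  show ((j.val + k) % N + N - j.val) % N = k
  rcases Nat.lt_or_ge (j.val + k) N with h | h
  · rw [Nat.mod_eq_of_lt h, show j.val + k + N - j.val = k + N from by omega,
      Nat.mod_eq_sub_mod (show N ≤ k + N by omega),
      show k + N - N = k from by omega, Nat.mod_eq_of_lt hk]
  · rw [Nat.mod_eq_sub_mod (show N ≤ j.val + k by omega),
      Nat.mod_eq_of_lt (show j.val + k - N < N by omega),
      show j.val + k - N + N - j.val = k from by omega, Nat.mod_eq_of_lt hk]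

lemma idxf_eq_zero (j a : Fin N) : idxf j a = 0 ↔ a = j := by
  constructor
  · intro h
    have := fpos_idxf j a
    rw [h, fpos_zero] at this
    exact this.symm
  · intro h
    subst h
    have h0 : (0 : ℕ) < N := a.pos
    have := idxf_fpos a h0
    rwa [fpos_zero] at this

lemma exists_idx {j b : Fin N} (hbj : b ≠ j) :
    ∃ k, 1 ≤ k ∧ k ≤ N - 1 ∧ b = fpos j k := by
  refine ⟨idxf j b, ?_, ?_, (fpos_idxf j b).symm⟩
  · have := (idxf_eq_zero j b).not.mpr hbj
    omega
  · have := idxf_lt j b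
    omega

-- interior conditions
def CWi (μ : Fin N → Fin 1 → ℝ) (j : Fin N) (k : ℕ) : Prop :=
  ∀ l, 1 ≤ l → l < k → μ (fpos j l) 0 < 1/2

def CCWi (μ : Fin N → Fin 1 → ℝ) (j : Fin N) (k : ℕ) : Prop :=
  ∀ l, k < l → l ≤ N - 1 → μ (fpos j l) 0 < 1/2

def cond (μ : Fin N → Fin 1 → ℝ) (j : Fin N) (k : ℕ) : Prop :=
  (CWi μ j k ∧ μ (fpos j k) 0 < 1/2) ∨ (CCWi μ j k ∧ μ (fpos j k) 0 < 1/2) ∨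
    (CWi μ j k ∧ CCWi μ j k ∧ μ (fpos j k) 0 < 1)

def Gd (μ : Fin N → Fin 1 → ℝ) (j : Fin N) : Set (Fin N) :=
  {a | a = j ∨ ∃ k, 1 ≤ k ∧ k ≤ N - 1 ∧ a = fpos j k ∧ cond μ j k}

lemma spread_cw (hN : 3 ≤ N) {μ : Fin N → Fin 1 → ℝ} {j : Fin N} {k : ℕ}
    (h : ∀ l, 1 ≤ l → l ≤ k → μ (fpos j l) 0 < 1/2) :
    fpos j k ∈ (cstep μ)^[k] {j} := by
  induction k with
  | zero => rw [fpos_zero]; simp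
  | succ k ih =>
    rw [Function.iterate_succ_apply']
    apply mem_cstep_one hN
    · right
      rw [fpos_sub_one hN j (by omega), show k + 1 - 1 = k from rfl]
      exact ih (fun l h1 h2 => h l h1 (by omega))
    · exact h (k + 1) (by omega) le_rfl

lemma spread_ccw (hN : 3 ≤ N) {μ : Fin N → Fin 1 → ℝ} {j : Fin N} {k : ℕ} (hk : k ≤ N)
    (h : ∀ l, 1 ≤ l → l ≤ k → μ (fpos j (N - l)) 0 < 1/2) :
    fpos j (N - k) ∈ (cstep μ)^[k] {j} := by
  induction k with
  | zero => rw [Nat.sub_zero, fpos_N]; simp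
  | succ k ih =>
    rw [Function.iterate_succ_apply']
    apply mem_cstep_one hN
    · left
      rw [← fpos_succ hN, show N - (k+1) + 1 = N - k from by omega]
      exact ih (by omega) (fun l h1 h2 => h l h1 (by omega))
    · exact h (k + 1) (by omega) le_rfl

lemma meet (hN : 3 ≤ N) {μ : Fin N → Fin 1 → ℝ} {j : Fin N} {d : ℕ}
    (hd1 : 2 ≤ d) (hd2 : d ≤ N - 2)
    (hcw : CWi μ j d) (hccw : CCWi μ j d) (hμ : μ (fpos j d) 0 < 1) :
    fpos j d ∈ (cstep μ)^[N] {j} := by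
  have h1 : fpos j (d-1) ∈ (cstep μ)^[N-1] {j} :=
    iter_mono μ _ (show d - 1 ≤ N - 1 by omega)
      (spread_cw hN (fun l hl1 hl2 => hcw l hl1 (by omega)))
  have h2 : fpos j (d+1) ∈ (cstep μ)^[N-1] {j} := by
    have := spread_ccw hN (k := N - d - 1) (by omega) (fun l hl1 hl2 =>
      hccw (N - l) (by omega) (by omega))
    rw [show N - (N - d - 1) = d + 1 from by omega] at this
    exact iter_mono μ _ (by omega) this
  have hfin : fpos j d ∈ (cstep μ)^[N-1+1] {j} := by
    rw [Function.iterate_succ_apply']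
    apply mem_cstep_two hN
    · rw [← fpos_succ hN]; exact h2
    · rw [fpos_sub_one hN j (show 1 ≤ d by omega)]
      exact h1
    · exact hμ
  rwa [show N - 1 + 1 = N from by omega] at hfin

lemma helper_left (hN : 3 ≤ N) {μ : Fin N → Fin 1 → ℝ} {j : Fin N} {k : ℕ}
    (hk1 : 1 ≤ k) (hk2 : k ≤ N - 1) (hc : fpos j k - 1 ∈ Gd μ j) :
    CWi μ j k ∨ (CCWi μ j k ∧ μ (fpos j k) 0 < 1/2) := by
  by_cases hk : k = 1
  · left; intro l h1 h2; omega
  · rw [fpos_sub_one hN j hk1] at hc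
    rcases hc with hj | ⟨k', hk1', hk2', heq, hcond⟩
    · exfalso
      have heq0 : fpos j (k - 1) = fpos j 0 := by rw [fpos_zero]; exact hj
      have := fpos_inj j (show k - 1 < N by omega) (show 0 < N by omega) heq0
      omega
    · have hkk : k' = k - 1 := (fpos_inj j (by omega) (by omega) heq).symm
      subst hkk
      rcases hcond with ⟨hcw, hμc⟩ | ⟨hccw, hμc⟩ | ⟨hcw, hccw, hμc⟩
      · left
        intro l h1 h2
        by_cases hl : l < k - 1
        · exact hcw l h1 hl
        · rw [show l = k - 1 from by omega]; exact hμc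
      · right
        exact ⟨fun l h1 h2 => hccw l (by omega) h2, hccw k (by omega) hk2⟩
      · right
        exact ⟨fun l h1 h2 => hccw l (by omega) h2, hccw k (by omega) hk2⟩

lemma helper_right (hN : 3 ≤ N) {μ : Fin N → Fin 1 → ℝ} {j : Fin N} {k : ℕ}
    (hk1 : 1 ≤ k) (hk2 : k ≤ N - 1) (hc : fpos j k + 1 ∈ Gd μ j) :
    CCWi μ j k ∨ (CWi μ j k ∧ μ (fpos j k) 0 < 1/2) := by
  by_cases hk : k = N - 1
  · left; intro l h1 h2; omega
  · rw [← fpos_succ hN] at hc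
    rcases hc with hj | ⟨k', hk1', hk2', heq, hcond⟩
    · exfalso
      have heq0 : fpos j (k + 1) = fpos j 0 := by rw [fpos_zero]; exact hj
      have := fpos_inj j (show k + 1 < N by omega) (show 0 < N by omega) heq0
      omega
    · have hkk : k' = k + 1 := (fpos_inj j (by omega) (by omega) heq).symm
      subst hkk
      rcases hcond with ⟨hcw, hμc⟩ | ⟨hccw, hμc⟩ | ⟨hcw, hccw, hμc⟩
      · right
        exact ⟨fun l h1 h2 => hcw l h1 (by omega), hcw k hk1 (by omega)⟩
      · left
        intro l h1 h2
        by_cases hl : k + 1 < l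
        · exact hccw l hl h2
        · rw [show l = k + 1 from by omega]; exact hμc
      · right
        exact ⟨fun l h1 h2 => hcw l h1 (by omega), hcw k hk1 (by omega)⟩

lemma invariant (hN : 3 ≤ N) {μ : Fin N → Fin 1 → ℝ} {j : Fin N}
    (h0 : ∀ a, 0 ≤ μ a 0) {A : Finset (Fin N)} (hA : ∀ a ∈ A, a ∈ Gd μ j) :
    ∀ b ∈ cstep μ A, b ∈ Gd μ j := by
  intro b hb
  by_cases hbj : b = j
  · exact Or.inl hbj
  · obtain ⟨k, hk1, hk2, hbk⟩ := exists_idx hbj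
    subst hbk
    rcases cstep_cases hN (h0 _) hb with h | ⟨hnb, hμ⟩ | ⟨h1, h2, hμ⟩
    · exact hA _ h
    · rcases hnb with h | h
      · rcases helper_right hN hk1 hk2 (hA _ h) with hccw | ⟨hcw, hμ'⟩
        · exact Or.inr ⟨k, hk1, hk2, rfl, Or.inr (Or.inl ⟨hccw, hμ⟩)⟩
        · exact Or.inr ⟨k, hk1, hk2, rfl, Or.inl ⟨hcw, hμ⟩⟩
      · rcases helper_left hN hk1 hk2 (hA _ h) with hcw | ⟨hccw, hμ'⟩
        · exact Or.inr ⟨k, hk1, hk2, rfl, Or.inl ⟨hcw, hμ⟩⟩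
        · exact Or.inr ⟨k, hk1, hk2, rfl, Or.inr (Or.inl ⟨hccw, hμ⟩)⟩
    · rcases helper_left hN hk1 hk2 (hA _ h2) with hcw | ⟨hccw, hμ'⟩
      · rcases helper_right hN hk1 hk2 (hA _ h1) with hccw | ⟨hcw', hμ'⟩
        · exact Or.inr ⟨k, hk1, hk2, rfl, Or.inr (Or.inr ⟨hcw, hccw, hμ⟩)⟩
        · exact Or.inr ⟨k, hk1, hk2, rfl, Or.inl ⟨hcw', hμ'⟩⟩
      · exact Or.inr ⟨k, hk1, hk2, rfl, Or.inr (Or.inl ⟨hccw, hμ'⟩)⟩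

lemma iter_subset_Gd (hN : 3 ≤ N) {μ : Fin N → Fin 1 → ℝ} {j : Fin N}
    (h0 : ∀ a, 0 ≤ μ a 0) (t : ℕ) :
    ∀ b ∈ (cstep μ)^[t] {j}, b ∈ Gd μ j := by
  induction t with
  | zero =>
    intro b hb
    simp at hb
    exact Or.inl hb
  | succ t ih =>
    rw [Function.iterate_succ_apply']
    exact invariant hN h0 ih

theorem char (hN : 3 ≤ N) {μ : Fin N → Fin 1 → ℝ} {j : Fin N} {d : ℕ}
    (h0 : ∀ a, 0 ≤ μ a 0) (hd1 : 2 ≤ d) (hd2 : d ≤ N - 2) :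
    fpos j d ∈ (cstep μ)^[N] {j} ↔ cond μ j d := by
  constructor
  · intro h
    rcases iter_subset_Gd hN h0 N _ h with hj | ⟨k, hk1, hk2, heq, hcond⟩
    · exfalso
      have heq0 : fpos j d = fpos j 0 := by rw [fpos_zero]; exact hj
      have := fpos_inj j (show d < N by omega) (show 0 < N by omega) heq0
      omega
    · have : k = d := (fpos_inj j (by omega) (by omega) heq).symm
      subst this
      exact hcond
  · rintro (⟨hcw, hμ⟩ | ⟨hccw, hμ⟩ | ⟨hcw, hccw, hμ⟩)
    · refine iter_mono μ _ (show d ≤ N by omega) (spread_cw hN ?_)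
      intro l h1 h2
      by_cases hl : l < d
      · exact hcw l h1 hl
      · rw [show l = d from by omega]; exact hμ
    · have hh : ∀ l, 1 ≤ l → l ≤ N - d → μ (fpos j (N - l)) 0 < 1/2 := by
        intro l h1 h2
        by_cases hl : l < N - d
        · exact hccw (N - l) (by omega) (by omega)
        · rw [show N - l = d from by omega]; exact hμ
      have := spread_ccw hN (k := N - d) (by omega) hh
      rw [show N - (N - d) = d from by omega] at this
      exact iter_mono μ _ (by omega) this
    · exact meet hN hd1 hd2 hcw hccw hμ

-- ## Measure part

noncomputable def ν1 : Measure ℝ := volume.restrict (Set.Icc (0:ℝ) 1)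

lemma ν1_univ : ν1 Set.univ = 1 := by
  rw [ν1, Measure.restrict_apply_univ, Real.volume_Icc]
  norm_num

lemma ν1_Iio_half : ν1 (Set.Iio (1/2 : ℝ)) = ENNReal.ofReal (1/2) := by
  rw [ν1, Measure.restrict_apply measurableSet_Iio]
  have h : Set.Iio (1/2 : ℝ) ∩ Set.Icc 0 1 = Set.Ico 0 (1/2 : ℝ) := by
    ext x
    simp only [Set.mem_inter_iff, Set.mem_Iio, Set.mem_Icc, Set.mem_Ico]
    constructor
    · rintro ⟨h1, h2, h3⟩; exact ⟨h2, h1⟩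
    · rintro ⟨h1, h2⟩; exact ⟨h2, h1, by linarith⟩
  rw [h, Real.volume_Ico]
  norm_num

lemma ν1_Ico : ν1 (Set.Ico (1/2 : ℝ) 1) = ENNReal.ofReal (1/2) := by
  rw [ν1, Measure.restrict_apply measurableSet_Ico]
  have h : Set.Ico (1/2 : ℝ) 1 ∩ Set.Icc 0 1 = Set.Ico (1/2 : ℝ) 1 := by
    apply Set.inter_eq_self_of_subset_left
    intro x hx
    exact ⟨by linarith [hx.1], le_of_lt hx.2⟩
  rw [h, Real.volume_Ico]
  norm_num

lemma ν1_Iio_zero : ν1 (Set.Iio (0 : ℝ)) = 0 := by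
  rw [ν1, Measure.restrict_apply measurableSet_Iio]
  have h : Set.Iio (0:ℝ) ∩ Set.Icc 0 1 = ∅ := by
    ext x
    simp only [Set.mem_inter_iff, Set.mem_Iio, Set.mem_Icc, Set.mem_empty_iff_false, iff_false]
    rintro ⟨h1, h2, _⟩; linarith
  rw [h, measure_empty]

lemma th_box (B : Fin N → Set ℝ) :
    thMeasure N 1 {μ : Fin N → Fin 1 → ℝ | ∀ a, μ a 0 ∈ B a} = ∏ a : Fin N, ν1 (B a) := by
  have h1 : {μ : Fin N → Fin 1 → ℝ | ∀ a, μ a 0 ∈ B a}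
      = Set.univ.pi (fun a => Set.univ.pi (fun _ : Fin 1 => B a)) := by
    ext μ
    simp only [Set.mem_setOf_eq, Set.mem_univ_pi, Fin.forall_fin_one]
  rw [thMeasure, h1, Measure.pi_pi]
  apply Finset.prod_congr rfl
  intro a _
  rw [Measure.pi_pi]
  simp [ν1]

lemma box_measurable (B : Fin N → Set ℝ) (hB : ∀ a, MeasurableSet (B a)) :
    MeasurableSet {μ : Fin N → Fin 1 → ℝ | ∀ a, μ a 0 ∈ B a} := by
  have h : {μ : Fin N → Fin 1 → ℝ | ∀ a, μ a 0 ∈ B a}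
      = ⋂ a, (fun μ : Fin N → Fin 1 → ℝ => μ a 0) ⁻¹' (B a) := by
    ext μ
    simp only [Set.mem_setOf_eq, Set.mem_iInter, Set.mem_preimage]
  rw [h]
  refine MeasurableSet.iInter fun a => ?_
  have hm : Measurable fun μ : Fin N → Fin 1 → ℝ => μ a 0 :=
    (measurable_pi_apply (0 : Fin 1)).comp (measurable_pi_apply a)
  exact hm (hB a)

lemma inter_box (B C : Fin N → Set ℝ) :
    {μ : Fin N → Fin 1 → ℝ | ∀ a, μ a 0 ∈ B a} ∩ {μ : Fin N → Fin 1 → ℝ | ∀ a, μ a 0 ∈ C a}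
      = {μ : Fin N → Fin 1 → ℝ | ∀ a, μ a 0 ∈ B a ∩ C a} := by
  ext μ
  simp only [Set.mem_inter_iff, Set.mem_setOf_eq, ← forall_and]

def rotEquiv (j : Fin N) : Fin N ≃ Fin N where
  toFun k := fpos j k.val
  invFun a := ⟨idxf j a, idxf_lt j a⟩
  left_inv k := by
    apply Fin.ext
    show idxf j (fpos j k.val) = k.val
    exact idxf_fpos j k.isLt
  right_inv a := fpos_idxf j a

lemma th_box' (j : Fin N) (J : ℕ → Set ℝ) :
    thMeasure N 1 {μ : Fin N → Fin 1 → ℝ | ∀ a, μ a 0 ∈ J (idxf j a)}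
      = ∏ k ∈ Finset.range N, ν1 (J k) := by
  rw [th_box]
  rw [← Equiv.prod_comp (rotEquiv j) (fun a => ν1 (J (idxf j a)))]
  have h : ∀ k : Fin N, ν1 (J (idxf j (rotEquiv j k))) = ν1 (J k.val) := by
    intro k
    show ν1 (J (idxf j (fpos j k.val))) = ν1 (J k.val)
    rw [idxf_fpos j k.isLt]
  rw [Finset.prod_congr rfl (fun k _ => h k)]
  exact Fin.prod_univ_eq_prod_range (fun k => ν1 (J k)) N

lemma prod_if_range (c : ENNReal) (P : ℕ → Prop) [DecidablePred P] (n : ℕ) :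
    ∏ k ∈ Finset.range n, (if P k then c else 1) = c ^ ((Finset.range n).filter P).card := by
  rw [← Finset.prod_filter_mul_prod_filter_not (Finset.range n) P]
  have h1 : ∏ k ∈ (Finset.range n).filter P, (if P k then c else 1)
      = c ^ ((Finset.range n).filter P).card := by
    rw [Finset.prod_congr rfl (fun k hk => if_pos (Finset.mem_filter.mp hk).2),
      Finset.prod_const]
  have h2 : ∏ k ∈ (Finset.range n).filter (fun k => ¬ P k), (if P k then c else 1) = 1 :=
    Finset.prod_eq_one (fun k hk => if_neg (Finset.mem_filter.mp hk).2)
  rw [h1, h2, mul_one]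

lemma card_filter_icc {a b n : ℕ} (hb : b < n) :
    ((Finset.range n).filter (fun k => a ≤ k ∧ k ≤ b)).card = b + 1 - a := by
  have h : (Finset.range n).filter (fun k => a ≤ k ∧ k ≤ b) = Finset.Icc a b := by
    ext k
    simp only [Finset.mem_filter, Finset.mem_range, Finset.mem_Icc]
    omega
  rw [h, Nat.card_Icc]

-- interval data
def J1 (d k : ℕ) : Set ℝ := if 1 ≤ k ∧ k ≤ d then Set.Iio (1/2) else Set.univ
def J2 (N d k : ℕ) : Set ℝ := if d ≤ k ∧ k ≤ N - 1 then Set.Iio (1/2) else Set.univ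
def J3 (N d k : ℕ) : Set ℝ :=
  if k = d then Set.Ico (1/2) 1 else if 1 ≤ k ∧ k ≤ N - 1 then Set.Iio (1/2) else Set.univ

lemma J1_measurable (d k : ℕ) : MeasurableSet (J1 d k) := by
  unfold J1; split_ifs <;> [exact measurableSet_Iio; exact MeasurableSet.univ]

lemma J2_measurable (N d k : ℕ) : MeasurableSet (J2 N d k) := by
  unfold J2; split_ifs <;> [exact measurableSet_Iio; exact MeasurableSet.univ]

lemma J3_measurable (N d k : ℕ) : MeasurableSet (J3 N d k) := by
  unfold J3
  split_ifs <;> [exact measurableSet_Ico; exact measurableSet_Iio; exact MeasurableSet.univ]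

lemma mem_EJ (j : Fin N) (J : ℕ → Set ℝ) (μ : Fin N → Fin 1 → ℝ) :
    (∀ a, μ a 0 ∈ J (idxf j a)) ↔ (∀ k, k < N → μ (fpos j k) 0 ∈ J k) := by
  constructor
  · intro h k hk
    have := h (fpos j k)
    rwa [idxf_fpos j hk] at this
  · intro h a
    have := h (idxf j a) (idxf_lt j a)
    rwa [fpos_idxf j a] at this

variable (hN : 3 ≤ N)

lemma hE1 (j : Fin N) {d : ℕ} (hd1 : 2 ≤ d) (hd2 : d ≤ N - 2) :
    {μ : Fin N → Fin 1 → ℝ | ∀ a, μ a 0 ∈ J1 d (idxf j a)}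
      = {μ : Fin N → Fin 1 → ℝ | CWi μ j d ∧ μ (fpos j d) 0 < 1/2} := by
  ext μ
  simp only [Set.mem_setOf_eq, mem_EJ]
  constructor
  · intro h
    constructor
    · intro l h1 h2
      have := h l (by omega)
      rwa [J1, if_pos ⟨h1, by omega⟩] at this
    · have := h d (by omega)
      rwa [J1, if_pos ⟨by omega, le_rfl⟩] at this
  · rintro ⟨hcw, hμ⟩ k hk
    unfold J1
    split_ifs with hks
    · by_cases hkd : k = d
      · subst hkd; exact hμ
      · exact hcw k hks.1 (by omega)
    · trivial

lemma hE2 (j : Fin N) {d : ℕ} (hd1 : 2 ≤ d) (hd2 : d ≤ N - 2) :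
    {μ : Fin N → Fin 1 → ℝ | ∀ a, μ a 0 ∈ J2 N d (idxf j a)}
      = {μ : Fin N → Fin 1 → ℝ | CCWi μ j d ∧ μ (fpos j d) 0 < 1/2} := by
  ext μ
  simp only [Set.mem_setOf_eq, mem_EJ]
  constructor
  · intro h
    constructor
    · intro l h1 h2
      have := h l (by omega)
      rwa [J2, if_pos ⟨by omega, h2⟩] at this
    · have := h d (by omega)
      rwa [J2, if_pos ⟨le_rfl, by omega⟩] at this
  · rintro ⟨hccw, hμ⟩ k hk
    unfold J2
    split_ifs with hks
    · by_cases hkd : k = d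
      · subst hkd; exact hμ
      · exact hccw k (by omega) hks.2
    · trivial

lemma hE3 (j : Fin N) {d : ℕ} (hd1 : 2 ≤ d) (hd2 : d ≤ N - 2) :
    {μ : Fin N → Fin 1 → ℝ | ∀ a, μ a 0 ∈ J3 N d (idxf j a)}
      = {μ : Fin N → Fin 1 → ℝ | CWi μ j d ∧ CCWi μ j d ∧ μ (fpos j d) 0 ∈ Set.Ico (1/2 : ℝ) 1} := by
  ext μ
  simp only [Set.mem_setOf_eq, mem_EJ]
  constructor
  · intro h
    refine ⟨?_, ?_, ?_⟩
    · intro l h1 h2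
      have := h l (by omega)
      rwa [J3, if_neg (by omega), if_pos ⟨h1, by omega⟩] at this
    · intro l h1 h2
      have := h l (by omega)
      rwa [J3, if_neg (by omega), if_pos ⟨by omega, h2⟩] at this
    · have := h d (by omega)
      rwa [J3, if_pos rfl] at this
  · rintro ⟨hcw, hccw, hμ⟩ k hk
    unfold J3
    split_ifs with hkd hks
    · subst hkd; exact hμ
    · by_cases hlt : k < d
      · exact hcw k hks.1 hlt
      · exact hccw k (by omega) hks.2
    · trivial

lemma mE1 (j : Fin N) {d : ℕ} (hd1 : 2 ≤ d) (hd2 : d ≤ N - 2) :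
    thMeasure N 1 {μ : Fin N → Fin 1 → ℝ | ∀ a, μ a 0 ∈ J1 d (idxf j a)}
      = ENNReal.ofReal (1/2) ^ d := by
  rw [th_box' j]
  have h : ∀ k ∈ Finset.range N, ν1 (J1 d k) = (if 1 ≤ k ∧ k ≤ d then ENNReal.ofReal (1/2) else 1) := by
    intro k _
    unfold J1
    split_ifs
    · exact ν1_Iio_half
    · exact ν1_univ
  rw [Finset.prod_congr rfl h, prod_if_range, card_filter_icc (by omega)]
  congr 1 <;> omega

lemma mE2 (j : Fin N) {d : ℕ} (hd1 : 2 ≤ d) (hd2 : d ≤ N - 2) :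
    thMeasure N 1 {μ : Fin N → Fin 1 → ℝ | ∀ a, μ a 0 ∈ J2 N d (idxf j a)}
      = ENNReal.ofReal (1/2) ^ (N - d) := by
  rw [th_box' j]
  have h : ∀ k ∈ Finset.range N, ν1 (J2 N d k)
      = (if d ≤ k ∧ k ≤ N - 1 then ENNReal.ofReal (1/2) else 1) := by
    intro k _
    unfold J2
    split_ifs
    · exact ν1_Iio_half
    · exact ν1_univ
  rw [Finset.prod_congr rfl h, prod_if_range, card_filter_icc (by omega)]
  congr 1 <;> omega

lemma mE12 (j : Fin N) {d : ℕ} (hd1 : 2 ≤ d) (hd2 : d ≤ N - 2) :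
    thMeasure N 1 {μ : Fin N → Fin 1 → ℝ | ∀ a, μ a 0 ∈ J1 d (idxf j a) ∩ J2 N d (idxf j a)}
      = ENNReal.ofReal (1/2) ^ (N - 1) := by
  have hbox : thMeasure N 1 {μ : Fin N → Fin 1 → ℝ | ∀ a, μ a 0 ∈ J1 d (idxf j a) ∩ J2 N d (idxf j a)}
      = ∏ k ∈ Finset.range N, ν1 (J1 d k ∩ J2 N d k) := th_box' j (fun k => J1 d k ∩ J2 N d k)
  rw [hbox]
  have h : ∀ k ∈ Finset.range N, ν1 (J1 d k ∩ J2 N d k)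
      = (if 1 ≤ k ∧ k ≤ N - 1 then ENNReal.ofReal (1/2) else 1) := by
    intro k hk
    simp only [Finset.mem_range] at hk
    unfold J1 J2
    by_cases hA : 1 ≤ k ∧ k ≤ d
    · rw [if_pos hA]
      by_cases hB : d ≤ k ∧ k ≤ N - 1
      · rw [if_pos hB, Set.inter_self, if_pos (by omega), ν1_Iio_half]
      · rw [if_neg hB, Set.inter_univ, if_pos (by omega), ν1_Iio_half]
    · rw [if_neg hA]
      by_cases hB : d ≤ k ∧ k ≤ N - 1
      · rw [if_pos hB, Set.univ_inter, if_pos (by omega), ν1_Iio_half]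
      · rw [if_neg hB, Set.univ_inter, if_neg (by omega), ν1_univ]
  rw [Finset.prod_congr rfl h, prod_if_range, card_filter_icc (by omega)]
  congr 1 <;> omega

lemma mE3 (j : Fin N) {d : ℕ} (hd1 : 2 ≤ d) (hd2 : d ≤ N - 2) :
    thMeasure N 1 {μ : Fin N → Fin 1 → ℝ | ∀ a, μ a 0 ∈ J3 N d (idxf j a)}
      = ENNReal.ofReal (1/2) ^ (N - 1) := by
  rw [th_box' j]
  have h : ∀ k ∈ Finset.range N, ν1 (J3 N d k)
      = (if 1 ≤ k ∧ k ≤ N - 1 then ENNReal.ofReal (1/2) else 1) := by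
    intro k hk
    simp only [Finset.mem_range] at hk
    unfold J3
    by_cases hkd : k = d
    · rw [if_pos hkd, if_pos (by omega), ν1_Ico]
    · rw [if_neg hkd]
      split_ifs
      · exact ν1_Iio_half
      · exact ν1_univ
  rw [Finset.prod_congr rfl h, prod_if_range, card_filter_icc (by omega)]
  congr 1 <;> omega

lemma compl_F_null :
    thMeasure N 1 {μ : Fin N → Fin 1 → ℝ | ∀ a, 0 ≤ μ a 0}ᶜ = 0 := by
  have hsub : {μ : Fin N → Fin 1 → ℝ | ∀ a, 0 ≤ μ a 0}ᶜ
      ⊆ ⋃ a : Fin N, {μ : Fin N → Fin 1 → ℝ | μ a 0 < 0} := by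
    intro μ hμ
    simp only [Set.mem_compl_iff, Set.mem_setOf_eq, not_forall, not_le] at hμ
    obtain ⟨a, ha⟩ := hμ
    exact Set.mem_iUnion.mpr ⟨a, ha⟩
  refine measure_mono_null hsub ?_
  · apply measure_iUnion_null
    intro a
    have he : {μ : Fin N → Fin 1 → ℝ | μ a 0 < 0} =
        {μ : Fin N → Fin 1 → ℝ | ∀ b, μ b 0 ∈ (if b = a then Set.Iio (0:ℝ) else Set.univ)} := by
      ext μ
      simp only [Set.mem_setOf_eq]
      constructor
      · intro h b
        split_ifs with hb
        · subst hb; exact h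
        · trivial
      · intro h
        have := h a
        rwa [if_pos rfl] at this
    rw [he, th_box]
    apply Finset.prod_eq_zero (Finset.mem_univ a)
    rw [if_pos rfl, ν1_Iio_zero]

lemma meas_inter_conull {X : Type*} [MeasurableSpace X] (m : Measure X) (s F : Set X)
    (h : m Fᶜ = 0) : m (s ∩ F) = m s := by
  apply le_antisymm (measure_mono Set.inter_subset_left)
  calc m s = m ((s ∩ F) ∪ (s ∩ Fᶜ)) := by rw [Set.inter_union_compl]
    _ ≤ m (s ∩ F) + m (s ∩ Fᶜ) := measure_union_le _ _
    _ ≤ m (s ∩ F) + 0 := by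
        gcongr
        exact le_trans (measure_mono Set.inter_subset_right) h.le
    _ = m (s ∩ F) := add_zero _

theorem main_measure (hN3 : 3 ≤ N) (j : Fin N) {d : ℕ} (hd1 : 2 ≤ d) (hd2 : d ≤ N - 2) :
    thMeasure N 1 {μ : Fin N → Fin 1 → ℝ | fpos j d ∈ (cstep μ)^[N] ({j} : Finset (Fin N))} =
      ENNReal.ofReal (1/2) ^ d + ENNReal.ofReal (1/2) ^ (N - d) := by
  set F : Set (Fin N → Fin 1 → ℝ) := {μ | ∀ a, 0 ≤ μ a 0} with hFdef
  set S : Set (Fin N → Fin 1 → ℝ) := {μ | fpos j d ∈ (cstep μ)^[N] ({j} : Finset (Fin N))} with hSdef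
  set E1 : Set (Fin N → Fin 1 → ℝ) := {μ | ∀ a, μ a 0 ∈ J1 d (idxf j a)} with hE1def
  set E2 : Set (Fin N → Fin 1 → ℝ) := {μ | ∀ a, μ a 0 ∈ J2 N d (idxf j a)} with hE2def
  set E3 : Set (Fin N → Fin 1 → ℝ) := {μ | ∀ a, μ a 0 ∈ J3 N d (idxf j a)} with hE3def
  set E : Set (Fin N → Fin 1 → ℝ) := {μ | cond μ j d} with hEdef
  have hSE : S ∩ F = E ∩ F := by
    ext μ
    simp only [hSdef, hEdef, hFdef, Set.mem_inter_iff, Set.mem_setOf_eq]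
    constructor
    · rintro ⟨hS, hF⟩
      exact ⟨(char hN3 hF hd1 hd2).mp hS, hF⟩
    · rintro ⟨hE, hF⟩
      exact ⟨(char hN3 hF hd1 hd2).mpr hE, hF⟩
  have hFc := compl_F_null (N := N)
  have hmS : thMeasure N 1 S = thMeasure N 1 E := by
    rw [← meas_inter_conull (thMeasure N 1) S F hFc, hSE,
      meas_inter_conull (thMeasure N 1) E F hFc]
  -- decompose E
  have hdecomp : E = (E1 ∪ E2) ∪ E3 := by
    rw [hE1def, hE2def, hE3def, hE1 j hd1 hd2, hE2 j hd1 hd2, hE3 j hd1 hd2]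
    ext μ
    simp only [hEdef, Set.mem_setOf_eq, Set.mem_union, Set.mem_Ico, cond]
    constructor
    · rintro (h | h | ⟨hcw, hccw, hμ⟩)
      · exact Or.inl (Or.inl h)
      · exact Or.inl (Or.inr h)
      · by_cases hhalf : μ (fpos j d) 0 < 1/2
        · exact Or.inl (Or.inl ⟨hcw, hhalf⟩)
        · exact Or.inr ⟨hcw, hccw, by linarith, hμ⟩
    · rintro ((h | h) | ⟨hcw, hccw, h1, h2⟩)
      · exact Or.inl h
      · exact Or.inr (Or.inl h)
      · exact Or.inr (Or.inr ⟨hcw, hccw, h2⟩)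
  have hmeas2 : MeasurableSet E2 := box_measurable _ (fun a => J2_measurable N d _)
  have hmeas3 : MeasurableSet E3 := box_measurable _ (fun a => J3_measurable N d _)
  have hdisj : Disjoint (E1 ∪ E2) E3 := by
    rw [Set.disjoint_left]
    intro μ hμ hμ3
    have hd3 : μ (fpos j d) 0 ∈ J3 N d (idxf j (fpos j d)) := hμ3 (fpos j d)
    rw [idxf_fpos j (show d < N by omega), J3, if_pos rfl] at hd3
    have hlt : μ (fpos j d) 0 < 1/2 := by
      rcases hμ with h | h
      · have := h (fpos j d)
        rwa [idxf_fpos j (show d < N by omega), J1, if_pos ⟨by omega, le_rfl⟩] at this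
      · have := h (fpos j d)
        rwa [idxf_fpos j (show d < N by omega), J2, if_pos ⟨le_rfl, by omega⟩] at this
    have := hd3.1
    linarith
  have h12 : thMeasure N 1 (E1 ∪ E2) + thMeasure N 1 (E1 ∩ E2)
      = thMeasure N 1 E1 + thMeasure N 1 E2 := measure_union_add_inter E1 hmeas2
  have hinter : thMeasure N 1 (E1 ∩ E2) = ENNReal.ofReal (1/2) ^ (N - 1) := by
    rw [hE1def, hE2def, inter_box]
    exact mE12 j hd1 hd2
  have hm3 : thMeasure N 1 E3 = ENNReal.ofReal (1/2) ^ (N - 1) := mE3 j hd1 hd2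
  have hm1 : thMeasure N 1 E1 = ENNReal.ofReal (1/2) ^ d := mE1 j hd1 hd2
  have hm2 : thMeasure N 1 E2 = ENNReal.ofReal (1/2) ^ (N - d) := mE2 j hd1 hd2
  have hmE : thMeasure N 1 E = thMeasure N 1 (E1 ∪ E2) + thMeasure N 1 E3 := by
    rw [hdecomp, measure_union hdisj hmeas3]
  rw [hmS, hmE, hm3, ← hinter, h12, hm1, hm2]


theorem pLTM_eq {N : ℕ} [NeZero N] (hN3 : 3 ≤ N) (u : Fin N → Protocol) (j : Fin N)
    {d : ℕ} (hd1 : 2 ≤ d) (hd2 : d ≤ N - 2) :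
    pLTM (fun _ : Fin 1 => cycleW N) u {j} (fpos j d) = (1/2:ℝ)^d + (1/2:ℝ)^(N-d) := by
  rw [pLTM]
  have hset : {μ : Fin N → Fin 1 → ℝ | fpos j d ∈ ltmSS (fun _ : Fin 1 => cycleW N) u {j} μ}
      = {μ : Fin N → Fin 1 → ℝ | fpos j d ∈ (cstep μ)^[N] ({j} : Finset (Fin N))} := by
    ext μ
    rw [Set.mem_setOf_eq, Set.mem_setOf_eq, ltmSS, ltmStep_eq_cstep]
  rw [hset, main_measure hN3 j hd1 hd2,
    ENNReal.toReal_add (ENNReal.pow_ne_top ENNReal.ofReal_ne_top)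
      (ENNReal.pow_ne_top ENNReal.ofReal_ne_top),
    ENNReal.toReal_pow, ENNReal.toReal_pow, ENNReal.toReal_ofReal (by norm_num)]

end CP


/-- on the monoplex cycle network on `N ≥ 7` agents with seed `{j}`,
under the same index conditions as on the permutation network,
ℙ_LTM(i) = (1/2)^{|i−j|} + (1/2)^{N−|i−j|} (for any protocol assignment `u`,
since OR and AND coincide on a monoplex network). -/
theorem cycle_prob (N : ℕ) (hN : 7 ≤ N) (u : Fin N → Protocol) (i j : Fin N)
    (hi1 : 2 ≤ i.val) (hi2 : i.val ≤ N - 4)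
    (hj1 : 1 ≤ j.val) (hj2 : j.val ≤ N - 3)
    (hd : 2 ≤ Nat.dist i.val j.val) :
    pLTM (fun _ : Fin 1 => cycleW N) u {j} i =
      (1/2 : ℝ) ^ (Nat.dist i.val j.val) +
        (1/2 : ℝ) ^ (N - Nat.dist i.val j.val) := by
  haveI : NeZero N := ⟨by omega⟩
  have hN3 : 3 ≤ N := by omega
  have hi := i.isLt
  have hj := j.isLt
  have hdd : Nat.dist i.val j.val = i.val - j.val + (j.val - i.val) := by
    simp [Nat.dist]
  rcases le_or_gt j.val i.val with hc | hc
  · have hieq : i = CP.fpos j (i.val - j.val) := by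
      apply Fin.ext
      show i.val = (j.val + (i.val - j.val)) % N
      rw [show j.val + (i.val - j.val) = i.val from by omega, Nat.mod_eq_of_lt hi]
    have hdist : Nat.dist i.val j.val = i.val - j.val := by omega
    have hp := CP.pLTM_eq hN3 u j (d := i.val - j.val) (by omega) (by omega)
    rw [← hieq] at hp
    rw [hdist, hp]
  · have hieq : i = CP.fpos j (N - (j.val - i.val)) := by
      apply Fin.ext
      show i.val = (j.val + (N - (j.val - i.val))) % N
      rw [show j.val + (N - (j.val - i.val)) = N + i.val from by omega,
        Nat.mod_eq_sub_mod (by omega), show N + i.val - N = i.val from by omega,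
        Nat.mod_eq_of_lt hi]
    have hdist : Nat.dist i.val j.val = j.val - i.val := by omega
    have hp := CP.pLTM_eq hN3 u j (d := N - (j.val - i.val)) (by omega) (by omega)
    rw [← hieq, show N - (N - (j.val - i.val)) = j.val - i.val from by omega] at hp
    rw [hdist, hp]
    exact add_comm _ _
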